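/- Let C and D be categories with finite colimits and let G : C → D be a functor that preserves pushout squares. Then for every finite set S with |S| ≥ 2 and every punctured S-cube F : P_{≤|S|−1}(S) → C, the functor G preserves the colimit of F; that is, the canonical map colim(G ∘ F) → G(colim F) is an isomorphism. (Claim established in the proof of Proposition 3.1.12 via Lemma 3.1.11: a pushout-preserving functor preserves colimits of punctured cubes.) -/

import Mathlib

open CategoryTheory CategoryTheory.Limits

/- Finite posets (with decidable order) are finite categories, so that the colimits below
exist in categories with finite colimits. -/
instance fintypeHomOfPreorder {α : Type} [Preorder α] [DecidableRel (α := α) (· ≤ ·)]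
    (X Y : α) : Fintype (X ⟶ Y) :=
  if h : X ≤ Y then Fintype.ofSubsingleton (homOfLE h)
  else haveI : IsEmpty (X ⟶ Y) := ⟨fun g => h (leOfHom g)⟩; Fintype.ofIsEmpty

instance finCategoryOfPreorder {α : Type} [Preorder α] [Fintype α]
    [DecidableRel (α := α) (· ≤ ·)] : FinCategory α where

/-- The punctured cube poset `P_{≤ |S| - 1}(S)` of subsets of `S` of cardinality `≤ |S| - 1`. -/
abbrev PuncturedCubePoset (S : Type) [Fintype S] [DecidableEq S] : Type :=
  {I : Finset S // I.card ≤ Fintype.card S - 1}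

namespace PCAux

universe v u v' u'
variable {C : Type u} [Category.{v} C] {D' : Type u'} [Category.{v'} D']

/-- A functor preserves colimits over a shape with a terminal object. -/
lemma preservesColimitsOfShape_of_terminal (G : C ⥤ D') {J : Type*} [Category J] {T : J}
    (hT : IsTerminal T) : PreservesColimitsOfShape J G where
  preservesColimit {K} := ⟨fun {c} hc => ⟨by
    have h2 : IsColimit (coconeOfDiagramTerminal hT (K ⋙ G)) :=
      colimitOfDiagramTerminal hT (K ⋙ G)
    have e : coconeOfDiagramTerminal hT (K ⋙ G) ≅ G.mapCocone (coconeOfDiagramTerminal hT K) :=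
      Cocones.ext (Iso.refl _) (by intro j; simp [coconeOfDiagramTerminal])
    have h3 : IsColimit (G.mapCocone (coconeOfDiagramTerminal hT K)) := h2.ofIsoColimit e
    exact h3.ofIsoColimit ((Cocones.functoriality K G).mapIso
      (IsColimit.uniqueUpToIso (colimitOfDiagramTerminal hT K) hc))⟩⟩

section Glue
variable {S : Type} [Fintype S] [DecidableEq S] (s : S)

/-- subsets not containing `s` -/
abbrev Pne := {I : PuncturedCubePoset S // s ∉ I.1}
/-- subsets containing `s` -/
abbrev Pme := {I : PuncturedCubePoset S // s ∈ I.1}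
/-- small subsets not containing `s` -/
abbrev Psm := {I : PuncturedCubePoset S // s ∉ I.1 ∧ I.1.card ≤ Fintype.card S - 2}

abbrev incl0 : Pne s ⥤ PuncturedCubePoset S := Monotone.functor (f := Subtype.val) (fun _ _ h => h)
abbrev incl1 : Pme s ⥤ PuncturedCubePoset S := Monotone.functor (f := Subtype.val) (fun _ _ h => h)

abbrev j0 : Psm s ⥤ Pne s :=
  Monotone.functor (f := fun K => ⟨K.1, K.2.1⟩) (fun _ _ h => h)

variable (hs2 : 2 ≤ Fintype.card S)

def j1 : Psm s ⥤ Pme s :=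
  Monotone.functor
    (f := fun K => ⟨⟨insert s K.1.1, by
      have h1 := Finset.card_insert_le s K.1.1
      have h2 := K.2.2
      omega⟩, Finset.mem_insert_self s _⟩)
    (fun _ _ h => Finset.insert_subset_insert s h)

section GlueCocone
variable (F : PuncturedCubePoset S ⥤ C)
  (c0 : Cocone (incl0 s ⋙ F)) (c1 : Cocone (incl1 s ⋙ F))
  (cr : Cocone (j0 s ⋙ incl0 s ⋙ F))
  (u : cr.pt ⟶ c0.pt) (v : cr.pt ⟶ c1.pt)
  {W : C} (inl : c0.pt ⟶ W) (inr : c1.pt ⟶ W)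

variable (hu : ∀ K : Psm s, cr.ι.app K ≫ u = c0.ι.app ((j0 s).obj K))
  (hv : ∀ K : Psm s, cr.ι.app K ≫ v =
    F.map (homOfLE (Finset.subset_insert s _ : ((incl0 s).obj ((j0 s).obj K)) ≤
      (incl1 s).obj ((j1 s hs2).obj K))) ≫ c1.ι.app ((j1 s hs2).obj K))
  (comm : u ≫ inl = v ≫ inr)

/-- The glued cocone over the punctured cube. -/
def gluedCocone : Cocone F where
  pt := W
  ι :=
    { app := fun I =>
        if h : s ∈ I.1 then c1.ι.app ⟨I, h⟩ ≫ inr else c0.ι.app ⟨I, h⟩ ≫ inl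
      naturality := by
        intro I J f
        simp only [Functor.const_obj_obj, Functor.const_obj_map, Category.comp_id]
        by_cases hI : s ∈ I.1
        · have hJ : s ∈ J.1 := leOfHom f hI
          rw [dif_pos hI, dif_pos hJ]
          have h1 := c1.w (homOfLE (leOfHom f) : (⟨I, hI⟩ : Pme s) ⟶ ⟨J, hJ⟩)
          rw [Functor.comp_map] at h1
          have hf : f = (incl1 s).map (homOfLE (leOfHom f) : (⟨I, hI⟩ : Pme s) ⟶ ⟨J, hJ⟩) :=
            Subsingleton.elim _ _
          have key : F.map ((incl1 s).map (homOfLE (leOfHom f) : (⟨I, hI⟩ : Pme s) ⟶ ⟨J, hJ⟩)) ≫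
              c1.ι.app ⟨J, hJ⟩ ≫ inr = c1.ι.app ⟨I, hI⟩ ≫ inr := by
            rw [← Category.assoc, h1]
          exact key
        · by_cases hJ : s ∈ J.1
          · rw [dif_neg hI, dif_pos hJ]
            have hJc := J.2
            have hKcard : (J.1.erase s).card = J.1.card - 1 := Finset.card_erase_of_mem hJ
            set K : Psm s := ⟨⟨J.1.erase s, by omega⟩, Finset.notMem_erase s _,
              show (J.1.erase s).card ≤ Fintype.card S - 2 by omega⟩ with hK
            have hIK : (⟨I, hI⟩ : Pne s) ≤ (j0 s).obj K :=
              Finset.subset_erase.mpr ⟨leOfHom f, hI⟩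
            have e : (j1 s hs2).obj K = ⟨J, hJ⟩ :=
              Subtype.ext (Subtype.ext (Finset.insert_erase hJ))
            have hKJ : ((incl0 s).obj ((j0 s).obj K)) ≤ ((incl1 s).obj (⟨J, hJ⟩ : Pme s)) :=
              Finset.erase_subset s J.1
            have hv' : cr.ι.app K ≫ v = F.map (homOfLE hKJ) ≫ c1.ι.app ⟨J, hJ⟩ := by
              have key : ∀ (J' : Pme s) (hJ' : (j1 s hs2).obj K = J')
                  (h : ((incl0 s).obj ((j0 s).obj K)) ≤ (incl1 s).obj J'),
                  cr.ι.app K ≫ v = F.map (homOfLE h) ≫ c1.ι.app J' := by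
                intro J' hJ' h
                subst hJ'
                exact hv K
              exact key _ e hKJ
            have h0 := c0.w (homOfLE hIK)
            rw [Functor.comp_map] at h0
            have hu' := hu K
            have hf : f = (incl0 s).map (homOfLE hIK) ≫ homOfLE hKJ :=
              Subsingleton.elim _ _
            have hB : c0.ι.app ((j0 s).obj K) ≫ inl = cr.ι.app K ≫ u ≫ inl := by
              rw [← Category.assoc, hu']
            have hC : cr.ι.app K ≫ u ≫ inl = cr.ι.app K ≫ v ≫ inr := by
              rw [comm]
            have hD : cr.ι.app K ≫ v ≫ inr = F.map (homOfLE hKJ) ≫ c1.ι.app ⟨J, hJ⟩ ≫ inr := by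
              rw [← Category.assoc, hv', Category.assoc]
            have key : F.map ((incl0 s).map (homOfLE hIK) ≫ homOfLE hKJ) ≫ c1.ι.app ⟨J, hJ⟩ ≫ inr =
                c0.ι.app ⟨I, hI⟩ ≫ inl := by
              rw [F.map_comp, Category.assoc, ← hD, ← hC, ← hB, ← Category.assoc, h0]
            exact key
          · rw [dif_neg hI, dif_neg hJ]
            have h0 := c0.w (homOfLE (leOfHom f) : (⟨I, hI⟩ : Pne s) ⟶ ⟨J, hJ⟩)
            rw [Functor.comp_map] at h0
            have hf : f = (incl0 s).map (homOfLE (leOfHom f) : (⟨I, hI⟩ : Pne s) ⟶ ⟨J, hJ⟩) :=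
              Subsingleton.elim _ _
            have key : F.map ((incl0 s).map (homOfLE (leOfHom f) : (⟨I, hI⟩ : Pne s) ⟶ ⟨J, hJ⟩)) ≫
                c0.ι.app ⟨J, hJ⟩ ≫ inl = c0.ι.app ⟨I, hI⟩ ≫ inl := by
              rw [← Category.assoc, h0]
            exact key }

/-- The glued cocone is a colimit. -/
noncomputable def gluedIsColimit (h0 : IsColimit c0) (h1 : IsColimit c1) (hr : IsColimit cr)
    (hp : IsPushout u v inl inr) :
    IsColimit (gluedCocone s hs2 F c0 c1 cr u v inl inr hu hv comm) where
  desc t := hp.desc (h0.desc (t.whisker (incl0 s))) (h1.desc (t.whisker (incl1 s))) (by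
    apply hr.hom_ext
    intro K
    rw [← Category.assoc, hu K, ← Category.assoc, hv K,
      h0.fac (t.whisker (incl0 s)) ((j0 s).obj K), Category.assoc,
      h1.fac (t.whisker (incl1 s)) ((j1 s hs2).obj K)]
    exact (t.w (homOfLE (Finset.subset_insert s _) :
      ((incl0 s).obj ((j0 s).obj K)) ⟶ ((incl1 s).obj ((j1 s hs2).obj K)))).symm)
  fac t I := by
    dsimp only [gluedCocone]
    by_cases hI : s ∈ I.1
    · rw [dif_pos hI]
      exact (Category.assoc _ _ _).trans ((congrArg (c1.ι.app ⟨I, hI⟩ ≫ ·)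
        (hp.inr_desc _ _ _)).trans (h1.fac (t.whisker (incl1 s)) ⟨I, hI⟩))
    · rw [dif_neg hI]
      exact (Category.assoc _ _ _).trans ((congrArg (c0.ι.app ⟨I, hI⟩ ≫ ·)
        (hp.inl_desc _ _ _)).trans (h0.fac (t.whisker (incl0 s)) ⟨I, hI⟩))
  uniq t m hm := by
    apply hp.hom_ext
    · apply h0.hom_ext
      intro x
      have h := hm ((incl0 s).obj x)
      rw [show (gluedCocone s hs2 F c0 c1 cr u v inl inr hu hv comm).ι.app ((incl0 s).obj x) =
        c0.ι.app x ≫ inl from dif_neg x.2] at h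
      simp only [← Category.assoc]
      exact (Category.assoc _ _ _).symm.trans (h.trans ((h0.fac (t.whisker (incl0 s)) x).symm.trans
        ((congrArg (c0.ι.app x ≫ ·) (hp.inl_desc _ _ _).symm).trans (Category.assoc _ _ _).symm)))
    · apply h1.hom_ext
      intro x
      have h := hm ((incl1 s).obj x)
      rw [show (gluedCocone s hs2 F c0 c1 cr u v inl inr hu hv comm).ι.app ((incl1 s).obj x) =
        c1.ι.app x ≫ inr from dif_pos x.2] at h
      simp only [← Category.assoc]
      exact (Category.assoc _ _ _).symm.trans (h.trans ((h1.fac (t.whisker (incl1 s)) x).symm.trans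
        ((congrArg (c1.ι.app x ≫ ·) (hp.inr_desc _ _ _).symm).trans (Category.assoc _ _ _).symm)))

end GlueCocone

lemma card_compl_single : Fintype.card {x : S // x ≠ s} = Fintype.card S - 1 := by
  have := Fintype.card_subtype_compl (· = s) (α := S)
  simp only [Fintype.card_subtype_eq] at this
  exact this

/-- `P_{≤ n-2}(S ∖ {s})` is isomorphic to the poset of small subsets avoiding `s`. -/
def psmIso : PuncturedCubePoset {x : S // x ≠ s} ≃o Psm s where
  toFun A := ⟨⟨A.1.map (Function.Embedding.subtype _), by
      have h := A.2
      have e := card_compl_single s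
      rw [Finset.card_map]
      omega⟩,
    Finset.notMem_map_subtype_of_not_property _ (by simp), by
      show (A.1.map (Function.Embedding.subtype _)).card ≤ Fintype.card S - 2
      have h := A.2
      have e := card_compl_single s
      rw [Finset.card_map]
      omega⟩
  invFun K := ⟨K.1.1.subtype (· ≠ s), by
      have h := K.2.2
      have e := card_compl_single s
      rw [Finset.card_subtype]
      have h2 := Finset.card_filter_le K.1.1 (· ≠ s)
      omega⟩
  left_inv A := by
    apply Subtype.ext
    dsimp
    ext ⟨x, hx⟩
    simp only [Finset.mem_subtype, Finset.mem_map, Function.Embedding.coe_subtype]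
    constructor
    · rintro ⟨⟨a, ha⟩, haA, rfl⟩
      exact haA
    · intro hA
      exact ⟨⟨x, hx⟩, hA, rfl⟩
  right_inv K := by
    apply Subtype.ext
    apply Subtype.ext
    dsimp
    rw [Finset.subtype_map_of_mem]
    intro x hx
    exact fun h => K.2.1 (h ▸ hx)
  map_rel_iff' {A B} := Finset.map_subset_map

/-- `P_{≤ n-2}(S ∖ {s})` is isomorphic to the poset of proper subsets containing `s`. -/
def pmeIso : PuncturedCubePoset {x : S // x ≠ s} ≃o Pme s where
  toFun A := ⟨⟨insert s (A.1.map (Function.Embedding.subtype _)), by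
      have h := A.2
      have e := card_compl_single s
      have h1 := Finset.card_insert_le s (A.1.map (Function.Embedding.subtype (· ≠ s)))
      rw [Finset.card_map] at h1
      omega⟩,
    Finset.mem_insert_self s _⟩
  invFun J := ⟨(J.1.1.erase s).subtype (· ≠ s), by
      have h := J.1.2
      have e := card_compl_single s
      rw [Finset.card_subtype]
      have h2 := Finset.card_filter_le (J.1.1.erase s) (· ≠ s)
      have h3 := Finset.card_erase_of_mem J.2
      omega⟩
  left_inv A := by
    apply Subtype.ext
    dsimp
    rw [Finset.erase_insert (Finset.notMem_map_subtype_of_not_property _ (by simp))]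
    ext ⟨x, hx⟩
    simp only [Finset.mem_subtype, Finset.mem_map, Function.Embedding.coe_subtype]
    constructor
    · rintro ⟨⟨a, ha⟩, haA, rfl⟩
      exact haA
    · intro hA
      exact ⟨⟨x, hx⟩, hA, rfl⟩
  right_inv J := by
    apply Subtype.ext
    apply Subtype.ext
    dsimp
    rw [Finset.subtype_map_of_mem (fun x hx => Finset.ne_of_mem_erase hx),
      Finset.insert_erase J.2]
  map_rel_iff' {A B} := by
    constructor
    · intro h
      exact Finset.map_subset_map.mp
        ((Finset.insert_subset_insert_iff
          (Finset.notMem_map_subtype_of_not_property _ (by simp))).mp h)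
    · intro h
      exact Finset.insert_subset_insert s (Finset.map_subset_map.mpr h)

/-- The poset of subsets avoiding `s` has a terminal object, namely `univ.erase s`. -/
def pneTerminal : IsTerminal (⟨⟨Finset.univ.erase s, by
      rw [Finset.card_erase_of_mem (Finset.mem_univ s), Finset.card_univ]⟩,
    Finset.notMem_erase s _⟩ : Pne s) :=
  IsTerminal.ofUniqueHom
    (fun I => homOfLE (Finset.subset_erase.mpr ⟨Finset.subset_univ _, I.2⟩))
    (fun _ _ => Subsingleton.elim _ _)

end Glue

/-- If `|S| ≤ 1` the punctured cube poset has `∅` as terminal object. -/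
def emptyTerminal {S : Type} [Fintype S] [DecidableEq S] (h : Fintype.card S ≤ 1) :
    IsTerminal (⟨∅, by simp⟩ : PuncturedCubePoset S) :=
  IsTerminal.ofUniqueHom
    (fun I => homOfLE (show I.1 ⊆ ∅ by
      have h2 := I.2
      rw [Finset.card_eq_zero.mp (by omega : I.1.card = 0)]))
    (fun _ _ => Subsingleton.elim _ _)

variable {D : Type u'} [Category.{v'} D]

lemma main [HasFiniteColimits C] (G : C ⥤ D)
    (hG : ∀ {P X Y Z : C} (f : P ⟶ X) (g : P ⟶ Y) (inl : X ⟶ Z) (inr : Y ⟶ Z),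
      IsPushout f g inl inr → IsPushout (G.map f) (G.map g) (G.map inl) (G.map inr)) :
    ∀ (n : ℕ) (S : Type) [Fintype S] [DecidableEq S], Fintype.card S = n →
      PreservesColimitsOfShape (PuncturedCubePoset S) G := by
  intro n
  induction n with
  | zero =>
    intro S _ _ hn
    exact preservesColimitsOfShape_of_terminal G (emptyTerminal (by omega))
  | succ n ih =>
    intro S _ _ hn
    rcases Nat.lt_or_ge n 1 with hn1 | hn1
    · exact preservesColimitsOfShape_of_terminal G (emptyTerminal (by omega))
    have hS2 : 2 ≤ Fintype.card S := by omega
    obtain ⟨s⟩ : Nonempty S := Fintype.card_pos_iff.mp (by omega)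
    have hcard' : Fintype.card {x : S // x ≠ s} = n := by
      have := card_compl_single s
      omega
    haveI hPS' : PreservesColimitsOfShape (PuncturedCubePoset {x : S // x ≠ s}) G :=
      ih _ hcard'
    haveI hme : PreservesColimitsOfShape (Pme s) G :=
      preservesColimitsOfShape_of_equiv (pmeIso s hS2).equivalence G
    haveI hsm : PreservesColimitsOfShape (Psm s) G :=
      preservesColimitsOfShape_of_equiv (psmIso s hS2).equivalence G
    haveI hne : PreservesColimitsOfShape (Pne s) G :=
      preservesColimitsOfShape_of_terminal G (pneTerminal s)
    constructor
    intro F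
    -- the span of colimits in `C`
    let θ : (j0 s ⋙ incl0 s ⋙ F) ⟶ (j1 s hS2 ⋙ incl1 s ⋙ F) :=
      { app := fun K => F.map (homOfLE (Finset.subset_insert s _))
        naturality := by
          intro a b f
          simp only [Functor.comp_map, ← Functor.map_comp]
          rfl }
    let u : colimit (j0 s ⋙ incl0 s ⋙ F) ⟶ colimit (incl0 s ⋙ F) :=
      colimit.pre (incl0 s ⋙ F) (j0 s)
    let v : colimit (j0 s ⋙ incl0 s ⋙ F) ⟶ colimit (incl1 s ⋙ F) :=
      colimMap θ ≫ colimit.pre (incl1 s ⋙ F) (j1 s hS2)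
    have hu : ∀ K : Psm s, colimit.ι (j0 s ⋙ incl0 s ⋙ F) K ≫ u =
        colimit.ι (incl0 s ⋙ F) ((j0 s).obj K) := by
      intro K
      exact colimit.ι_pre (incl0 s ⋙ F) (j0 s) K
    have hv : ∀ K : Psm s, colimit.ι (j0 s ⋙ incl0 s ⋙ F) K ≫ v =
        F.map (homOfLE (Finset.subset_insert s _ : ((incl0 s).obj ((j0 s).obj K)) ≤
          (incl1 s).obj ((j1 s hS2).obj K))) ≫
          colimit.ι (incl1 s ⋙ F) ((j1 s hS2).obj K) := by
      intro K
      show colimit.ι _ K ≫ colimMap θ ≫ colimit.pre _ _ = _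
      rw [← Category.assoc, ι_colimMap, Category.assoc, colimit.ι_pre]
      try rfl
    have hp : IsPushout u v (pushout.inl u v) (pushout.inr u v) := IsPushout.of_hasPushout u v
    have hC : IsColimit (gluedCocone s hS2 F (colimit.cocone (incl0 s ⋙ F))
        (colimit.cocone (incl1 s ⋙ F)) (colimit.cocone (j0 s ⋙ incl0 s ⋙ F)) u v
        (pushout.inl u v) (pushout.inr u v) hu hv hp.w) :=
      gluedIsColimit s hS2 F (colimit.cocone (incl0 s ⋙ F)) (colimit.cocone (incl1 s ⋙ F))
        (colimit.cocone (j0 s ⋙ incl0 s ⋙ F)) u v (pushout.inl u v) (pushout.inr u v)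
        hu hv hp.w (colimit.isColimit _) (colimit.isColimit _) (colimit.isColimit _) hp
    -- the image data in `D`
    have hu' : ∀ K : Psm s,
        (G.mapCocone (colimit.cocone (j0 s ⋙ incl0 s ⋙ F))).ι.app K ≫ G.map u =
        (G.mapCocone (colimit.cocone (incl0 s ⋙ F))).ι.app ((j0 s).obj K) := by
      intro K
      dsimp
      rw [← G.map_comp, hu K]
      try rfl
    have hv' : ∀ K : Psm s,
        (G.mapCocone (colimit.cocone (j0 s ⋙ incl0 s ⋙ F))).ι.app K ≫ G.map v =
        (F ⋙ G).map (homOfLE (Finset.subset_insert s _ : ((incl0 s).obj ((j0 s).obj K)) ≤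
          (incl1 s).obj ((j1 s hS2).obj K))) ≫
          (G.mapCocone (colimit.cocone (incl1 s ⋙ F))).ι.app ((j1 s hS2).obj K) := by
      intro K
      dsimp
      rw [← G.map_comp, hv K, G.map_comp]
      try rfl
    have comm' : G.map u ≫ G.map (pushout.inl u v) = G.map v ≫ G.map (pushout.inr u v) := by
      rw [← G.map_comp, ← G.map_comp, hp.w]
    have hD : IsColimit (gluedCocone s hS2 (F ⋙ G)
        (G.mapCocone (colimit.cocone (incl0 s ⋙ F)))
        (G.mapCocone (colimit.cocone (incl1 s ⋙ F)))
        (G.mapCocone (colimit.cocone (j0 s ⋙ incl0 s ⋙ F)))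
        (G.map u) (G.map v) (G.map (pushout.inl u v)) (G.map (pushout.inr u v))
        hu' hv' comm') :=
      gluedIsColimit s hS2 (F ⋙ G)
        (G.mapCocone (colimit.cocone (incl0 s ⋙ F)))
        (G.mapCocone (colimit.cocone (incl1 s ⋙ F)))
        (G.mapCocone (colimit.cocone (j0 s ⋙ incl0 s ⋙ F)))
        (G.map u) (G.map v) (G.map (pushout.inl u v)) (G.map (pushout.inr u v))
        hu' hv' comm'
        (isColimitOfPreserves G (colimit.isColimit (incl0 s ⋙ F)))
        (isColimitOfPreserves G (colimit.isColimit (incl1 s ⋙ F)))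
        (isColimitOfPreserves G (colimit.isColimit (j0 s ⋙ incl0 s ⋙ F)))
        (hG u v (pushout.inl u v) (pushout.inr u v) hp)
    have hmap : IsColimit (G.mapCocone (gluedCocone s hS2 F (colimit.cocone (incl0 s ⋙ F))
        (colimit.cocone (incl1 s ⋙ F)) (colimit.cocone (j0 s ⋙ incl0 s ⋙ F)) u v
        (pushout.inl u v) (pushout.inr u v) hu hv hp.w)) := by
      refine hD.ofIsoColimit (Cocones.ext (Iso.refl _) ?_)
      intro I
      by_cases h : s ∈ I.1
      · dsimp [gluedCocone]
        rw [dif_pos h, dif_pos h]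
        simp
        exact (G.map_comp _ _).symm
      · dsimp [gluedCocone]
        rw [dif_neg h, dif_neg h]
        simp
        exact (G.map_comp _ _).symm
    exact preservesColimit_of_preserves_colimit_cocone hC hmap

end PCAux

/-- A functor preserving pushout squares preserves colimits of punctured cubes: for every
finite set `S` with `|S| ≥ 2` and every punctured `S`-cube `F : P_{≤|S|-1}(S) ⥤ C`, the
canonical map `colim (G ∘ F) ⟶ G (colim F)` is an isomorphism.
(Claim in the proof of Proposition 3.1.12, via Lemma 3.1.11.) -/
theorem isIso_colimit_post_of_preserves_pushouts
    {C : Type*} {D : Type*} [Category C] [Category D]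
    [HasFiniteColimits C] [HasFiniteColimits D] (G : C ⥤ D)
    (hG : ∀ {P X Y Z : C} (f : P ⟶ X) (g : P ⟶ Y) (inl : X ⟶ Z) (inr : Y ⟶ Z),
      IsPushout f g inl inr → IsPushout (G.map f) (G.map g) (G.map inl) (G.map inr))
    (S : Type) [Fintype S] [DecidableEq S] (hS : 2 ≤ Fintype.card S)
    (F : PuncturedCubePoset S ⥤ C) :
    IsIso (colimit.post F G) := by
  haveI : PreservesColimitsOfShape (PuncturedCubePoset S) G :=
    PCAux.main G hG (Fintype.card S) S rfl
  infer_instance
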